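/- arXiv:1111.5927 — 3 statements merged into one kernel-verified Lean document; each statement's English description precedes it below -/
import Mathlib

section
/- Let μ be a compactly supported probability measure on a domain Ω ⊂ ℝ^d, absolutely continuous with respect to Lebesgue measure. Let (Ω', F, P) be a probability space and let T_1, T_2, … be i.i.d. random maps Ω → Ω that are uniformly bounded, such that almost surely the family of realizations together with the identity forms an admissible family of deformations on Ω, and whose pointwise expectation satisfies E[T(x)] = x for all x ∈ Ω. For J ≥ 1 let μ_B^J = ( (1/J) Σ_{j=1}^J T_j )_# μ (the Wasserstein barycenter with equal weights of the warped measures (T_j)_#μ). Then almost surely W2²(μ_B^J, μ) → 0 as J → ∞. -/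
open MeasureTheory ENNReal NNReal Filter Topology

noncomputable section

/-- A coupling of `μ` and `ν`: a measure on the product whose marginals are `μ` and `ν`. -/
def IsCoupling {E : Type*} [MeasurableSpace E] (π : Measure (E × E)) (μ ν : Measure E) : Prop :=
  π.map Prod.fst = μ ∧ π.map Prod.snd = ν

/-- Squared 2-Wasserstein distance: infimum over couplings of `∫ |x - y|² dπ`. -/
def W2sq {E : Type*} [NormedAddCommGroup E] [MeasurableSpace E] (μ ν : Measure E) : ℝ≥0∞ :=
  ⨅ (π : Measure (E × E)) (_ : IsCoupling π μ ν), ∫⁻ p, (‖p.1 - p.2‖₊ : ℝ≥0∞) ^ 2 ∂π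

/-- The 2-Wasserstein distance. -/
def W2 {E : Type*} [NormedAddCommGroup E] [MeasurableSpace E] (μ ν : Measure E) : ℝ≥0∞ :=
  W2sq μ ν ^ (1/2 : ℝ)

/-- A measure has a finite second moment. -/
def FiniteSecondMoment {E : Type*} [NormedAddCommGroup E] [MeasurableSpace E]
    (μ : Measure E) : Prop :=
  ∫⁻ x, (‖x‖₊ : ℝ≥0∞) ^ 2 ∂μ < ∞

/-- An admissible family of deformations of a domain `Ω ⊆ ℝ^d`: it contains the identity,
every map is a bijection of `Ω` onto itself, and every composition `T i ∘ (T j)⁻¹` is the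
gradient of a (proper) lower semicontinuous convex function on `Ω` (expressed by: there is a
convex l.s.c. `φ` whose gradient at the point `T j y` is `T i y`, for every `y ∈ Ω`). -/
def AdmissibleFamily {d : ℕ} (Ω : Set (EuclideanSpace ℝ (Fin d))) {ι : Type*}
    (T : ι → EuclideanSpace ℝ (Fin d) → EuclideanSpace ℝ (Fin d)) : Prop :=
  (∃ i₀, ∀ x ∈ Ω, T i₀ x = x) ∧
  (∀ i, Set.BijOn (T i) Ω Ω) ∧
  (∀ i j, ∃ φ : EuclideanSpace ℝ (Fin d) → ℝ,
    ConvexOn ℝ Ω φ ∧ LowerSemicontinuousOn φ Ω ∧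
    ∀ y ∈ Ω, HasGradientAt φ (T i y) (T j y))


open scoped RealInnerProductSpace

section AuxLemmas

variable {F : Type*} [NormedAddCommGroup F] [InnerProductSpace ℝ F] [CompleteSpace F]

/-- Difference quotients along a direction converge to the inner product with the gradient. -/
lemma tendsto_lineQuot {φ : F → ℝ} {g x : F} (v : F) (h : HasGradientAt φ g x) :
    Tendsto (fun n : ℕ => ((n : ℝ) + 1) * (φ (x + ((n : ℝ) + 1)⁻¹ • v) - φ x))
      atTop (𝓝 ⟪g, v⟫) := by
  have hc : HasDerivAt (fun t : ℝ => x + t • v) v 0 := by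
    simpa using ((hasDerivAt_id (0 : ℝ)).smul_const v).const_add x
  have h' : HasFDerivAt φ (InnerProductSpace.toDual ℝ F g) ((fun t : ℝ => x + t • v) 0) := by
    simpa using h.hasFDerivAt
  have hφ : HasDerivAt (fun t : ℝ => φ (x + t • v)) ⟪g, v⟫ 0 := by
    simpa [InnerProductSpace.toDual_apply_apply, Function.comp_def] using h'.comp_hasDerivAt 0 hc
  have hslope := hφ.tendsto_slope_zero
  have hseq : Tendsto (fun n : ℕ => ((n : ℝ) + 1)⁻¹) atTop (𝓝[≠] (0 : ℝ)) := by
    apply tendsto_nhdsWithin_of_tendsto_nhds_of_eventually_within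
    · simpa [one_div] using tendsto_one_div_add_atTop_nhds_zero_nat (𝕜 := ℝ)
    · refine Eventually.of_forall fun n => ?_
      have : (0 : ℝ) < ((n : ℝ) + 1)⁻¹ := by positivity
      exact Set.mem_compl_singleton_iff.2 this.ne'
  have := hslope.comp hseq
  refine this.congr fun n => ?_
  simp [Function.comp, inv_inv, smul_eq_mul]

/-- Subgradient inequality at a point of differentiability of a convex function. -/
lemma inner_le_of_convexOn {s : Set F} {φ : F → ℝ} (hφ : ConvexOn ℝ s φ) {x y g : F}
    (hx : x ∈ s) (hy : y ∈ s) (h : HasGradientAt φ g x) :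
    ⟪g, y - x⟫ ≤ φ y - φ x := by
  refine le_of_tendsto (tendsto_lineQuot (y - x) h) (Eventually.of_forall fun n => ?_)
  have hn : (0 : ℝ) < (n : ℝ) + 1 := by positivity
  set t : ℝ := ((n : ℝ) + 1)⁻¹ with htdef
  have ht0 : 0 < t := by positivity
  have ht1 : t ≤ 1 := by
    rw [htdef]
    rw [inv_le_one_iff₀]
    right; linarith
  have hcomb := hφ.2 hx hy (by linarith : (0:ℝ) ≤ 1 - t) ht0.le (by ring)
  have hxeq : (1 - t) • x + t • y = x + t • (y - x) := by module
  rw [hxeq] at hcomb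
  simp only [smul_eq_mul] at hcomb
  have hts : ((n : ℝ) + 1) * t = 1 := by
    rw [htdef]; field_simp
  have h2 := mul_le_mul_of_nonneg_left hcomb hn.le
  have h3 : ((n : ℝ) + 1) * ((1 - t) * φ x + t * φ y) = ((n : ℝ) + 1) * φ x - φ x + φ y := by
    linear_combination (φ y - φ x) * hts
  rw [h3] at h2
  linarith

/-- Monotonicity of the gradient of a convex function. -/
lemma grad_mono {s : Set F} {φ : F → ℝ} (hφ : ConvexOn ℝ s φ) {x y gx gy : F}
    (hx : x ∈ s) (hy : y ∈ s)
    (hgx : HasGradientAt φ gx x) (hgy : HasGradientAt φ gy y) :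
    0 ≤ ⟪gx - gy, x - y⟫ := by
  have h1 := inner_le_of_convexOn hφ hx hy hgx
  have h2 := inner_le_of_convexOn hφ hy hx hgy
  have e : ⟪gx - gy, x - y⟫ = -⟪gx, y - x⟫ - ⟪gy, x - y⟫ := by
    simp [inner_sub_left, inner_sub_right]
    ring
  rw [e]
  linarith

end AuxLemmas

section Euclid

variable {d : ℕ}

/-- The pointwise gradient of a convex function is a.e. measurable on the interior
of its domain. -/
lemma aemeasurable_of_gradient {Ω : Set (EuclideanSpace ℝ (Fin d))}
    {φ : EuclideanSpace ℝ (Fin d) → ℝ} (hφ : ConvexOn ℝ Ω φ)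
    {g : EuclideanSpace ℝ (Fin d) → EuclideanSpace ℝ (Fin d)}
    (hg : ∀ y ∈ Ω, HasGradientAt φ (g y) y)
    {μ : Measure (EuclideanSpace ℝ (Fin d))} (hμ : ∀ᵐ x ∂μ, x ∈ interior Ω) :
    AEMeasurable g μ := by
  set U := interior Ω with hUdef
  have hUo : IsOpen U := isOpen_interior
  have hφU : ConvexOn ℝ U φ := hφ.subset interior_subset hφ.1.interior
  have hcont : ContinuousOn φ U := hφU.continuousOn hUo
  have key : ∀ v : EuclideanSpace ℝ (Fin d),
      AEMeasurable (fun x => ⟪g x, v⟫) μ := by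
    intro v
    set A : ℕ → Set (EuclideanSpace ℝ (Fin d)) := fun n =>
      U ∩ (fun y => y + ((n : ℝ) + 1)⁻¹ • v) ⁻¹' U with hAdef
    have hAopen : ∀ n, IsOpen (A n) := fun n =>
      hUo.inter (hUo.preimage (continuous_id.add continuous_const))
    set q : ℕ → EuclideanSpace ℝ (Fin d) → ℝ := fun n =>
      Set.indicator (A n) (fun x => ((n : ℝ) + 1) * (φ (x + ((n : ℝ) + 1)⁻¹ • v) - φ x))
      with hqdef
    have hqmeas : ∀ n, AEMeasurable (q n) μ := by
      intro n
      rw [hqdef]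
      rw [aemeasurable_indicator_iff (hAopen n).measurableSet]
      refine ContinuousOn.aemeasurable ?_ (hAopen n).measurableSet
      refine continuousOn_const.mul (ContinuousOn.sub ?_ (hcont.mono Set.inter_subset_left))
      exact hcont.comp ((continuous_id.add continuous_const).continuousOn)
        (fun x hx => hx.2)
    have hlim : ∀ᵐ x ∂μ, Tendsto (fun n => q n x) atTop (𝓝 ⟪g x, v⟫) := by
      filter_upwards [hμ] with x hxU
      have hgrad := hg x (interior_subset hxU)
      have hbase := tendsto_lineQuot v hgrad
      refine hbase.congr' ?_
      have htend : Tendsto (fun n : ℕ => x + ((n : ℝ) + 1)⁻¹ • v) atTop (𝓝 x) := by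
        have h1 : Tendsto (fun n : ℕ => ((n : ℝ) + 1)⁻¹) atTop (𝓝 (0 : ℝ)) := by
          simpa [one_div] using tendsto_one_div_add_atTop_nhds_zero_nat (𝕜 := ℝ)
        have := tendsto_const_nhds (x := x) (f := atTop (α := ℕ)) |>.add (h1.smul_const v)
        simpa using this
      filter_upwards [htend.eventually (hUo.mem_nhds hxU)] with n hn
      rw [hqdef]
      exact (Set.indicator_of_mem (show x ∈ A n from ⟨hxU, hn⟩) (fun x => ((n : ℝ) + 1) * (φ (x + ((n : ℝ) + 1)⁻¹ • v) - φ x))).symm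
    exact aemeasurable_of_tendsto_metrizable_ae atTop hqmeas hlim
  set b := EuclideanSpace.basisFun (Fin d) ℝ with hbdef
  have hsum : AEMeasurable (fun x => ∑ k : Fin d, ⟪(b k : EuclideanSpace ℝ (Fin d)), g x⟫ • (b k : EuclideanSpace ℝ (Fin d))) μ := by
    refine Finset.aemeasurable_fun_sum _ fun k _ => ?_
    have h1 : AEMeasurable (fun x => ⟪(b k : EuclideanSpace ℝ (Fin d)), g x⟫) μ := by
      refine (key (b k)).congr (Eventually.of_forall fun x => ?_)
      exact real_inner_comm _ _
    exact h1.smul_const _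
  refine hsum.congr (Eventually.of_forall fun x => ?_)
  exact b.sum_repr' (g x)

/-- Pointwise limits of uniformly bounded monotone maps: convergence on a dense subset of an
open set to the identity implies convergence everywhere on the open set. -/
lemma tendsto_of_monotone_dense {U D : Set (EuclideanSpace ℝ (Fin d))}
    (hUo : IsOpen U) (hDU : D ⊆ U) (hdense : U ⊆ closure D)
    {F : ℕ → EuclideanSpace ℝ (Fin d) → EuclideanSpace ℝ (Fin d)} {C : ℝ}
    (hmono : ∀ J, ∀ x ∈ U, ∀ y ∈ U, 0 ≤ ⟪F J x - F J y, x - y⟫)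
    (hbd : ∀ J, ∀ x ∈ U, ‖F J x‖ ≤ C)
    (hD : ∀ x ∈ D, Tendsto (fun J => F J x) atTop (𝓝 x))
    {x₀ : EuclideanSpace ℝ (Fin d)} (hx₀ : x₀ ∈ U) :
    Tendsto (fun J => F J x₀) atTop (𝓝 x₀) := by
  apply tendsto_of_subseq_tendsto
  intro ns hns
  obtain ⟨p, -, ms, hms, htend⟩ := tendsto_subseq_of_bounded
    (Metric.isBounded_closedBall (x := (0 : EuclideanSpace ℝ (Fin d))) (r := C))
    (fun n => Metric.mem_closedBall.2 (by simpa using hbd (ns n) x₀ hx₀))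
  have hmsat : Tendsto (fun n => ns (ms n)) atTop atTop := hns.comp hms.tendsto_atTop
  have key : ∀ z ∈ closure D, 0 ≤ ⟪z - p, z - x₀⟫ := by
    have hclosed : IsClosed {z : EuclideanSpace ℝ (Fin d) | 0 ≤ ⟪z - p, z - x₀⟫} := by
      apply isClosed_le continuous_const
      exact Continuous.inner (continuous_id.sub continuous_const)
        (continuous_id.sub continuous_const)
    intro z hz
    refine hclosed.closure_subset_iff.2 ?_ hz
    intro w hw
    have h1 : Tendsto (fun n => ⟪F (ns (ms n)) w - F (ns (ms n)) x₀, w - x₀⟫)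
        atTop (𝓝 ⟪w - p, w - x₀⟫) :=
      Tendsto.inner (((hD w hw).comp hmsat).sub htend) tendsto_const_nhds
    exact ge_of_tendsto h1 (Eventually.of_forall fun n =>
      hmono _ _ (hDU hw) _ hx₀)
  have hp : p = x₀ := by
    by_contra hne
    set w := p - x₀ with hwdef
    have hw0 : 0 < ‖w‖ := by
      rw [norm_pos_iff, hwdef, sub_ne_zero]
      exact hne
    obtain ⟨ε, hε, hball⟩ := Metric.isOpen_iff.1 hUo x₀ hx₀
    set t : ℝ := min (1/2) (ε / (2 * ‖w‖)) with htdef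
    have ht0 : 0 < t := lt_min (by norm_num) (by positivity)
    have ht1 : t < 1 := lt_of_le_of_lt (min_le_left _ _) (by norm_num)
    have hz : x₀ + t • w ∈ U := by
      apply hball
      rw [Metric.mem_ball, dist_eq_norm]
      have he : ‖x₀ + t • w - x₀‖ = t * ‖w‖ := by
        simp [norm_smul, abs_of_pos ht0]
      rw [he]
      have h2 : t ≤ ε / (2 * ‖w‖) := min_le_right _ _
      have : t * ‖w‖ ≤ (ε / (2 * ‖w‖)) * ‖w‖ := by
        exact mul_le_mul_of_nonneg_right h2 hw0.le
      have heq : (ε / (2 * ‖w‖)) * ‖w‖ = ε / 2 := by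
        field_simp
      rw [heq] at this
      linarith
    have hkey := key _ (hdense hz)
    have hcalc : ⟪x₀ + t • w - p, x₀ + t • w - x₀⟫ = (t - 1) * (t * ‖w‖ ^ 2) := by
      have e1 : x₀ + t • w - p = (t - 1) • w := by rw [hwdef]; module
      have e2 : x₀ + t • w - x₀ = t • w := by module
      rw [e1, e2, real_inner_smul_left, real_inner_smul_right, real_inner_self_eq_norm_sq]
    rw [hcalc] at hkey
    nlinarith [mul_pos ht0 (mul_pos hw0 hw0), hkey, ht1]
  exact ⟨ms, hp ▸ htend⟩

end Euclid

/-- Template estimation: let `μ` be a compactly supported absolutely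
continuous probability measure on a domain `Ω ⊆ ℝ^d`, and let `T₁, T₂, …` be i.i.d.
uniformly bounded random maps `Ω → Ω` which a.s. form, together with the identity, an
admissible family of deformations, and whose pointwise expectation is the identity on `Ω`.
Then the equal-weight barycenter `μ_B^J = ((1/J) ∑_{j<J} T_j)_# μ` of the warped measures
satisfies `W₂²(μ_B^J, μ) → 0` almost surely as `J → ∞`. -/
theorem template_barycenter_consistency {d : ℕ}
    (Ω : Set (EuclideanSpace ℝ (Fin d)))
    (μ : Measure (EuclideanSpace ℝ (Fin d)))
    (hμ_prob : IsProbabilityMeasure μ) (hμ_ac : μ ≪ volume) (hμΩ : μ Ωᶜ = 0)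
    (hμ_cpt : ∃ K : Set (EuclideanSpace ℝ (Fin d)), IsCompact K ∧ μ Kᶜ = 0)
    {Ω' : Type*} [MeasurableSpace Ω'] (P : Measure Ω') (hP : IsProbabilityMeasure P)
    (T : ℕ → Ω' → EuclideanSpace ℝ (Fin d) → EuclideanSpace ℝ (Fin d))
    (h_meas : ∀ j, Measurable (T j))
    (h_indep : ProbabilityTheory.iIndepFun T P)
    (h_ident : ∀ i j, ProbabilityTheory.IdentDistrib (T i) (T j) P P)
    (h_bdd : ∃ C : ℝ, ∀ᵐ ω ∂P, ∀ j, ∀ x ∈ Ω, ‖T j ω x‖ ≤ C)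
    (h_adm : ∀ᵐ ω ∂P,
      AdmissibleFamily Ω fun o : Option ℕ => o.elim id fun j => T j ω)
    (h_centered : ∀ j, ∀ x ∈ Ω, (∫ ω, T j ω x ∂P) = x) :
    ∀ᵐ ω ∂P,
      Tendsto
        (fun J : ℕ =>
          W2sq (μ.map fun x => (J : ℝ)⁻¹ • ∑ j ∈ Finset.range J, T j ω x) μ)
        atTop (𝓝 0) := by
  classical
  obtain ⟨C, h_bddae⟩ := h_bdd
  obtain ⟨K, hK, hμK⟩ := hμ_cpt
  -- `Ω` is convex, by admissibility (which holds for at least one `ω`).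
  haveI : (ae P).NeBot := ae_neBot.2 hP.ne_zero
  obtain ⟨ω₀, hω₀⟩ := h_adm.exists
  obtain ⟨-, -, h3⟩ := hω₀
  have hΩconv : Convex ℝ Ω := (h3 none none).choose_spec.1.1
  set U := interior Ω with hUdef
  -- almost every point of `μ` lies in the interior of `Ω`
  have hμU : ∀ᵐ x ∂μ, x ∈ U := by
    have h1 : μ (frontier Ω) = 0 := hμ_ac (hΩconv.addHaar_frontier volume)
    have h2 : Uᶜ ⊆ Ωᶜ ∪ frontier Ω := by
      intro x hx
      by_cases hxΩ : x ∈ Ω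
      · exact Or.inr ⟨subset_closure hxΩ, hx⟩
      · exact Or.inl hxΩ
    exact mem_ae_iff.2 (measure_mono_null h2 (measure_union_null hμΩ h1))
  -- a countable dense subset of the interior
  obtain ⟨D, hDU, hDc, hDdense⟩ :=
    (TopologicalSpace.IsSeparable.of_separableSpace U).exists_countable_dense_subset
  haveI := hP
  -- strong law of large numbers, pointwise in `x`
  have hslln : ∀ x ∈ Ω, ∀ᵐ ω ∂P,
      Tendsto (fun J : ℕ => (J : ℝ)⁻¹ • ∑ j ∈ Finset.range J, T j ω x) atTop (𝓝 x) := by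
    intro x hx
    have hX : ∀ j, Measurable fun ω => T j ω x := fun j =>
      (measurable_pi_apply x).comp (h_meas j)
    have hint : Integrable (fun ω => T 0 ω x) P := by
      refine Integrable.mono' (integrable_const C) (hX 0).aestronglyMeasurable ?_
      filter_upwards [h_bddae] with ω hb using hb 0 x hx
    have := ProbabilityTheory.strong_law_ae (μ := P) (fun j ω => T j ω x) hint
      (fun i j hij => ((h_indep.indepFun hij).comp
        (measurable_pi_apply x) (measurable_pi_apply x)))
      (fun i => (h_ident i 0).comp (measurable_pi_apply x))
    simpa [h_centered 0 x hx] using this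
  have hDas : ∀ᵐ ω ∂P, ∀ x ∈ D,
      Tendsto (fun J : ℕ => (J : ℝ)⁻¹ • ∑ j ∈ Finset.range J, T j ω x) atTop (𝓝 x) :=
    (ae_ball_iff hDc).2 fun x hx => hslln x (interior_subset (hDU hx))
  obtain ⟨R, hR⟩ := hK.isBounded.subset_closedBall 0
  have hμK' : ∀ᵐ x ∂μ, x ∈ K := mem_ae_iff.2 hμK
  set C' : ℝ := max C 0 with hC'def
  filter_upwards [h_bddae, h_adm, hDas] with ω hb hadm hDconv
  set S : ℕ → EuclideanSpace ℝ (Fin d) → EuclideanSpace ℝ (Fin d) := fun J x => (J : ℝ)⁻¹ • ∑ j ∈ Finset.range J, T j ω x with hSdef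
  obtain ⟨-, -, hadm3⟩ := hadm
  -- gradient structure of each realized map
  have hgrad : ∀ j : ℕ, ∃ φ : EuclideanSpace ℝ (Fin d) → ℝ, ConvexOn ℝ Ω φ ∧
      ∀ y ∈ Ω, HasGradientAt φ (T j ω y) y := by
    intro j
    obtain ⟨φ, h1, -, h3⟩ := hadm3 (some j) none
    exact ⟨φ, h1, fun y hy => by simpa using h3 y hy⟩
  -- a.e. measurability
  have hTmeas : ∀ j : ℕ, AEMeasurable (fun x => T j ω x) μ := by
    intro j
    obtain ⟨φ, h1, h2⟩ := hgrad j
    exact aemeasurable_of_gradient h1 h2 hμU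
  have hSmeas : ∀ J, AEMeasurable (S J) μ := by
    intro J
    have : AEMeasurable (fun x => ∑ j ∈ Finset.range J, T j ω x) μ :=
      Finset.aemeasurable_fun_sum _ fun j _ => hTmeas j
    exact this.const_smul ((J : ℝ)⁻¹)
  -- monotonicity of the averaged maps
  have hmono : ∀ J, ∀ x ∈ U, ∀ y ∈ U, 0 ≤ ⟪S J x - S J y, x - y⟫ := by
    intro J x hx y hy
    have hxΩ := interior_subset hx
    have hyΩ := interior_subset hy
    have hsplit : S J x - S J y = (J : ℝ)⁻¹ • ∑ j ∈ Finset.range J, (T j ω x - T j ω y) := by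
      rw [hSdef]
      simp only []
      rw [← smul_sub, ← Finset.sum_sub_distrib]
    rw [hsplit, real_inner_smul_left, sum_inner]
    refine mul_nonneg (by positivity) (Finset.sum_nonneg fun j _ => ?_)
    obtain ⟨φ, h1, h2⟩ := hgrad j
    exact grad_mono h1 hxΩ hyΩ (h2 x hxΩ) (h2 y hyΩ)
  -- uniform bound for the averaged maps
  have hbdS : ∀ J, ∀ x ∈ U, ‖S J x‖ ≤ C' := by
    intro J x hx
    have hxΩ := interior_subset hx
    rcases Nat.eq_zero_or_pos J with h0 | hJ
    · subst h0; simp [hSdef, hC'def, le_max_iff]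
    · have hsum : ‖∑ j ∈ Finset.range J, T j ω x‖ ≤ (J : ℝ) * C' := by
        calc ‖∑ j ∈ Finset.range J, T j ω x‖ ≤ ∑ j ∈ Finset.range J, ‖T j ω x‖ :=
              norm_sum_le _ _
          _ ≤ ∑ _j ∈ Finset.range J, C' :=
              Finset.sum_le_sum fun j _ => le_trans (hb j x hxΩ) (le_max_left _ _)
          _ = (J : ℝ) * C' := by simp [mul_comm]
      have hJpos : (0 : ℝ) < (J : ℝ) := by exact_mod_cast hJ
      calc ‖S J x‖ = (J : ℝ)⁻¹ * ‖∑ j ∈ Finset.range J, T j ω x‖ := by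
            rw [hSdef]; simp [norm_smul, abs_of_pos (inv_pos.2 hJpos)]
        _ ≤ (J : ℝ)⁻¹ * ((J : ℝ) * C') := by
            exact mul_le_mul_of_nonneg_left hsum (inv_pos.2 hJpos).le
        _ = C' := by field_simp
  -- pointwise convergence on the interior
  have hUconv : ∀ x ∈ U, Tendsto (fun J => S J x) atTop (𝓝 x) := fun x hx =>
    tendsto_of_monotone_dense isOpen_interior hDU hDdense hmono hbdS hDconv hx
  -- convergence of the quadratic transport cost
  set B : ℝ≥0∞ := (ENNReal.ofReal (C' + R)) ^ 2 with hBdef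
  have hIlim : Tendsto (fun J => ∫⁻ x, (‖S J x - x‖₊ : ℝ≥0∞) ^ 2 ∂μ) atTop (𝓝 0) := by
    have h0 : (0 : ℝ≥0∞) = ∫⁻ _x, (0 : ℝ≥0∞) ∂μ := by simp
    rw [h0]
    refine tendsto_lintegral_of_dominated_convergence' (fun _ => B) (fun J => ?_) (fun J => ?_)
      ?_ ?_
    · exact ((hSmeas J).sub aemeasurable_id).enorm.pow_const 2
    · filter_upwards [hμU, hμK'] with x hxU hxK
      have h1 : ‖S J x - x‖ ≤ C' + R := by
        have h2 : ‖x‖ ≤ R := by simpa using hR hxK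
        calc ‖S J x - x‖ ≤ ‖S J x‖ + ‖x‖ := norm_sub_le _ _
          _ ≤ C' + R := add_le_add (hbdS J x hxU) h2
      have h3 : (‖S J x - x‖₊ : ℝ≥0∞) ≤ ENNReal.ofReal (C' + R) := by
        rw [← enorm_eq_nnnorm, ← ofReal_norm]
        exact ENNReal.ofReal_le_ofReal h1
      rw [hBdef]
      exact pow_le_pow_left' h3 2
    · rw [lintegral_const]
      exact ENNReal.mul_ne_top (ENNReal.pow_ne_top ENNReal.ofReal_ne_top)
        (measure_ne_top μ _)
    · filter_upwards [hμU] with x hxU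
      have h := hUconv x hxU
      have h2 : Tendsto (fun J => S J x - x) atTop (𝓝 0) := by
        simpa using h.sub_const x
      have h3 : Tendsto (fun J => ‖S J x - x‖₊) atTop (𝓝 0) := by
        simpa [Function.comp_def] using (continuous_nnnorm.tendsto (0 : EuclideanSpace ℝ (Fin d))).comp h2
      have h4 : Tendsto (fun J => (‖S J x - x‖₊ : ℝ≥0) ^ 2) atTop (𝓝 0) := by
        simpa using h3.pow 2
      have h5 := ENNReal.tendsto_coe.2 h4
      simpa [ENNReal.coe_pow] using h5
  -- bounding the Wasserstein cost by the cost of the obvious coupling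
  have hW : ∀ J, W2sq (μ.map (S J)) μ ≤ ∫⁻ x, (‖S J x - x‖₊ : ℝ≥0∞) ^ 2 ∂μ := by
    intro J
    set π : Measure (EuclideanSpace ℝ (Fin d) × EuclideanSpace ℝ (Fin d)) := μ.map (fun x => (S J x, x)) with hπdef
    have hpair : AEMeasurable (fun x => (S J x, x)) μ := (hSmeas J).prodMk aemeasurable_id
    have hcoup : IsCoupling π (μ.map (S J)) μ := by
      constructor
      · rw [hπdef, AEMeasurable.map_map_of_aemeasurable measurable_fst.aemeasurable hpair]
        rfl
      · rw [hπdef, AEMeasurable.map_map_of_aemeasurable measurable_snd.aemeasurable hpair]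
        exact Measure.map_id
    have hcost : Measurable fun p : EuclideanSpace ℝ (Fin d) × EuclideanSpace ℝ (Fin d) => (‖p.1 - p.2‖₊ : ℝ≥0∞) ^ 2 :=
      ((measurable_fst.sub measurable_snd).enorm).pow_const 2
    calc W2sq (μ.map (S J)) μ ≤ ∫⁻ p, (‖p.1 - p.2‖₊ : ℝ≥0∞) ^ 2 ∂π := iInf₂_le π hcoup
      _ = ∫⁻ x, (‖S J x - x‖₊ : ℝ≥0∞) ^ 2 ∂μ := by
          rw [hπdef, lintegral_map' hcost.aemeasurable hpair]
  refine tendsto_of_tendsto_of_tendsto_of_le_of_le tendsto_const_nhds hIlim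
    (fun J => zero_le) (fun J => ?_)
  simpa [hSdef] using hW J
end
end

section
/- Let μ_1, …, μ_J be probability measures on ℝ^d with finite second moments, let λ_1, …, λ_J be positive weights summing to 1, and let γ be any probability measure on (ℝ^d)^J whose j-th marginal is μ_j for each j. Then, writing T(x_1, …, x_J) = Σ_{i=1}^J λ_i x_i, one has ∫ Σ_{j=1}^J λ_j |T(x) − x_j|² dγ(x_1, …, x_J) = (1/2) Σ_{i=1}^J Σ_{j=1}^J λ_i λ_j ∫ |x_i − x_j|² dγ ≥ Σ_{1 ≤ i < j ≤ J} λ_i λ_j W2²(μ_i, μ_j). -/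
open MeasureTheory ENNReal NNReal Filter Topology

noncomputable section

lemma pointwise_real_id {E : Type*} [NormedAddCommGroup E] [InnerProductSpace ℝ E] {J : ℕ}
    (w : Fin J → ℝ) (hw : ∑ j, w j = 1) (x : Fin J → E) :
    ∑ j, w j * ‖(∑ i, w i • x i) - x j‖ ^ 2
      = (1 / 2) * ∑ i, ∑ j, w i * w j * ‖x i - x j‖ ^ 2 := by
  set T := ∑ i, w i • x i with hT
  set S := ∑ j, w j * ‖x j‖ ^ 2 with hS
  have hinner : ∀ y : E, ∑ j, w j * (inner ℝ (x j) y : ℝ) = inner ℝ T y := by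
    intro y
    rw [hT, sum_inner]
    simp [real_inner_smul_left]
  have hTT : (inner ℝ T T : ℝ) = ‖T‖ ^ 2 := real_inner_self_eq_norm_sq T
  have lhs_eq : ∑ j, w j * ‖T - x j‖ ^ 2 = S - ‖T‖ ^ 2 := by
    have expand : ∀ j : Fin J, w j * ‖T - x j‖ ^ 2
        = ‖T‖ ^ 2 * w j - 2 * (w j * inner ℝ (x j) T) + w j * ‖x j‖ ^ 2 := by
      intro j
      rw [norm_sub_sq_real, real_inner_comm]; ring
    rw [Finset.sum_congr rfl fun j _ => expand j, Finset.sum_add_distrib,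
      Finset.sum_sub_distrib, ← Finset.mul_sum, ← Finset.mul_sum,
      hw, hinner T, hTT, ← hS]
    ring
  have h1 : ∀ i : Fin J, ∑ j, w i * w j * ‖x i - x j‖ ^ 2
      = w i * S + ‖x i‖ ^ 2 * w i - 2 * (w i * (inner ℝ (x i) T : ℝ)) := by
    intro i
    have expand : ∀ j : Fin J, w i * w j * ‖x i - x j‖ ^ 2
        = w i * (w j * ‖x j‖ ^ 2) + (w i * ‖x i‖ ^ 2) * w j
          - 2 * (w i * (w j * inner ℝ (x j) (x i))) := by
      intro j
      rw [norm_sub_sq_real, real_inner_comm]; ring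
    rw [Finset.sum_congr rfl fun j _ => expand j, Finset.sum_sub_distrib,
      Finset.sum_add_distrib, ← Finset.mul_sum, ← Finset.mul_sum, ← Finset.mul_sum,
      ← Finset.mul_sum, hw, hinner (x i), real_inner_comm, ← hS]
    ring
  have rhs_eq : ∑ i, ∑ j, w i * w j * ‖x i - x j‖ ^ 2 = 2 * (S - ‖T‖ ^ 2) := by
    rw [Finset.sum_congr rfl fun i _ => h1 i, Finset.sum_sub_distrib,
      Finset.sum_add_distrib, ← Finset.sum_mul, ← Finset.mul_sum, hw, hinner T, hTT]
    have hS' : ∑ i, ‖x i‖ ^ 2 * w i = S := by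
      rw [hS]; exact Finset.sum_congr rfl fun i _ => mul_comm _ _
    rw [hS']; ring
  rw [lhs_eq, rhs_eq]; ring

lemma pointwise_ennreal_id {E : Type*} [NormedAddCommGroup E] [InnerProductSpace ℝ E] {J : ℕ}
    (w : Fin J → ℝ≥0) (hw : ∑ j, w j = 1) (x : Fin J → E) :
    ∑ j, (w j : ℝ≥0∞) * (‖(∑ i, (w i : ℝ) • x i) - x j‖₊ : ℝ≥0∞) ^ 2
      = (1 / 2 : ℝ≥0∞) * ∑ i, ∑ j,
          (w i : ℝ≥0∞) * (w j : ℝ≥0∞) * (‖x i - x j‖₊ : ℝ≥0∞) ^ 2 := by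
  have h2 : ((1 / 2 : ℝ≥0) : ℝ≥0∞) = (1 / 2 : ℝ≥0∞) := by
    rw [ENNReal.coe_div two_ne_zero]; norm_num
  rw [← h2]
  simp only [← ENNReal.coe_pow, ← ENNReal.coe_mul, ← ENNReal.coe_finset_sum]
  rw [ENNReal.coe_inj, ← NNReal.coe_inj]
  push_cast
  exact pointwise_real_id (fun j => (w j : ℝ)) (by exact_mod_cast congrArg NNReal.toReal hw) x

/-- For any multi-coupling `γ` of `μ_1, …, μ_J` and `T(x) = ∑ i, λ_i x_i`,
`∫ ∑_j λ_j |T(x) - x_j|² dγ = (1/2) ∑_{i,j} λ_i λ_j ∫ |x_i - x_j|² dγ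
  ≥ ∑_{i<j} λ_i λ_j W₂²(μ_i, μ_j)`. -/
theorem multimarginal_cost_identity_and_lower_bound {d J : ℕ}
    (μs : Fin J → Measure (EuclideanSpace ℝ (Fin d)))
    (hμ_prob : ∀ j, IsProbabilityMeasure (μs j))
    (hμ_mom : ∀ j, FiniteSecondMoment (μs j))
    (w : Fin J → ℝ≥0) (hw_pos : ∀ j, 0 < w j) (hw_sum : ∑ j, w j = 1)
    (γ : Measure (Fin J → EuclideanSpace ℝ (Fin d)))
    (hγ_prob : IsProbabilityMeasure γ)
    (hmarg : ∀ j, γ.map (fun x => x j) = μs j) :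
    (∫⁻ x, ∑ j, (w j : ℝ≥0∞) *
        (‖(∑ i, (w i : ℝ) • x i) - x j‖₊ : ℝ≥0∞) ^ 2 ∂γ =
      (1 / 2 : ℝ≥0∞) * ∑ i, ∑ j,
        (w i : ℝ≥0∞) * (w j : ℝ≥0∞) * ∫⁻ x, (‖x i - x j‖₊ : ℝ≥0∞) ^ 2 ∂γ) ∧
    (∑ i, ∑ j ∈ Finset.Ioi i, (w i : ℝ≥0∞) * (w j : ℝ≥0∞) * W2sq (μs i) (μs j) ≤
      (1 / 2 : ℝ≥0∞) * ∑ i, ∑ j,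
        (w i : ℝ≥0∞) * (w j : ℝ≥0∞) * ∫⁻ x, (‖x i - x j‖₊ : ℝ≥0∞) ^ 2 ∂γ) := by
  have hmeas : ∀ i j : Fin J, Measurable
      (fun x : Fin J → EuclideanSpace ℝ (Fin d) => (‖x i - x j‖₊ : ℝ≥0∞) ^ 2) := by
    intro i j
    exact (((continuous_apply i).sub (continuous_apply j)).nnnorm.measurable.coe_nnreal_ennreal).pow_const 2
  constructor
  · -- identity
    calc ∫⁻ x, ∑ j, (w j : ℝ≥0∞) * (‖(∑ i, (w i : ℝ) • x i) - x j‖₊ : ℝ≥0∞) ^ 2 ∂γ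
        = ∫⁻ x, (1 / 2 : ℝ≥0∞) * ∑ i, ∑ j,
            (w i : ℝ≥0∞) * (w j : ℝ≥0∞) * (‖x i - x j‖₊ : ℝ≥0∞) ^ 2 ∂γ := by
          exact lintegral_congr fun x => pointwise_ennreal_id w hw_sum x
      _ = (1 / 2 : ℝ≥0∞) * ∫⁻ x, ∑ i, ∑ j,
            (w i : ℝ≥0∞) * (w j : ℝ≥0∞) * (‖x i - x j‖₊ : ℝ≥0∞) ^ 2 ∂γ := by
          rw [lintegral_const_mul]
          exact Finset.measurable_sum _ fun i _ =>
            Finset.measurable_sum _ fun j _ => (hmeas i j).const_mul _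
      _ = (1 / 2 : ℝ≥0∞) * ∑ i, ∑ j,
            (w i : ℝ≥0∞) * (w j : ℝ≥0∞) * ∫⁻ x, (‖x i - x j‖₊ : ℝ≥0∞) ^ 2 ∂γ := by
          congr 1
          rw [lintegral_finset_sum _ fun i _ =>
            Finset.measurable_sum _ fun j _ => (hmeas i j).const_mul _]
          refine Finset.sum_congr rfl fun i _ => ?_
          rw [lintegral_finset_sum _ fun j _ => (hmeas i j).const_mul _]
          exact Finset.sum_congr rfl fun j _ => lintegral_const_mul _ (hmeas i j)
  · -- lower bound
    set C : Fin J → Fin J → ℝ≥0∞ := fun i j => ∫⁻ x, (‖x i - x j‖₊ : ℝ≥0∞) ^ 2 ∂γ with hC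
    set F : Fin J → Fin J → ℝ≥0∞ := fun i j => (w i : ℝ≥0∞) * (w j : ℝ≥0∞) * C i j with hF
    have hWle : ∀ i j, W2sq (μs i) (μs j) ≤ C i j := by
      intro i j
      have hm : Measurable (fun x : Fin J → EuclideanSpace ℝ (Fin d) => (x i, x j)) :=
        (measurable_pi_apply i).prodMk (measurable_pi_apply j)
      have hmint : Measurable (fun p : EuclideanSpace ℝ (Fin d) × EuclideanSpace ℝ (Fin d) =>
          (‖p.1 - p.2‖₊ : ℝ≥0∞) ^ 2) :=
        ((continuous_fst.sub continuous_snd).nnnorm.measurable.coe_nnreal_ennreal).pow_const 2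
      have hcoup : IsCoupling (γ.map fun x => (x i, x j)) (μs i) (μs j) := by
        constructor
        · rw [Measure.map_map measurable_fst hm]; exact hmarg i
        · rw [Measure.map_map measurable_snd hm]; exact hmarg j
      have step : W2sq (μs i) (μs j) ≤
          ∫⁻ p, (‖p.1 - p.2‖₊ : ℝ≥0∞) ^ 2 ∂(γ.map fun x => (x i, x j)) := by
        unfold W2sq
        exact iInf_le_of_le (γ.map fun x => (x i, x j)) (iInf_le_of_le hcoup le_rfl)
      rwa [lintegral_map hmint hm] at step
    have hCsym : ∀ i j, C i j = C j i := fun i j =>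
      lintegral_congr fun x => by rw [← nnnorm_neg, neg_sub]
    have hFdiag : ∀ i, F i i = 0 := by
      intro i
      simp [hF, hC]
    have hsplit : ∑ i, ∑ j, F i j = (∑ i, ∑ j ∈ Finset.Ioi i, F i j)
        + ∑ i, ∑ j ∈ Finset.Ioi i, F i j := by
      have h1 : ∀ i : Fin J, ∑ j, F i j
          = ∑ j ∈ Finset.Iio i, F i j + ∑ j ∈ Finset.Ioi i, F i j := by
        intro i
        rw [← Finset.sum_filter_add_sum_filter_not Finset.univ (· < i) (F i)]
        congr 1
        · apply Finset.sum_congr _ fun _ _ => rfl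
          ext j; simp
        · have : Finset.filter (fun j => ¬ j < i) Finset.univ = Finset.Ici i := by
            ext j; simp [not_lt]
          rw [this, Finset.Ici_eq_cons_Ioi, Finset.sum_cons, hFdiag, zero_add]
      have h2 : ∑ i, ∑ j ∈ Finset.Iio i, F i j = ∑ j, ∑ i ∈ Finset.Ioi j, F i j := by
        refine Finset.sum_comm' fun i j => ?_
        simp [and_comm]
      have h3 : ∑ j, ∑ i ∈ Finset.Ioi j, F i j = ∑ i, ∑ j ∈ Finset.Ioi i, F i j := by
        refine Finset.sum_congr rfl fun j _ => Finset.sum_congr rfl fun i _ => ?_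
        simp only [hF]
        rw [hCsym]; ring
      rw [Finset.sum_congr rfl fun i _ => h1 i, Finset.sum_add_distrib, h2, h3]
    calc ∑ i, ∑ j ∈ Finset.Ioi i, (w i : ℝ≥0∞) * (w j : ℝ≥0∞) * W2sq (μs i) (μs j)
        ≤ ∑ i, ∑ j ∈ Finset.Ioi i, F i j := by
          refine Finset.sum_le_sum fun i _ => Finset.sum_le_sum fun j _ => ?_
          exact mul_le_mul_right (hWle i j) _
      _ = (1 / 2 : ℝ≥0∞) * ∑ i, ∑ j, F i j := by
          rw [hsplit, ← two_mul, ← mul_assoc, one_div,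
            ENNReal.inv_mul_cancel two_ne_zero ENNReal.ofNat_ne_top, one_mul]
      _ = (1 / 2 : ℝ≥0∞) * ∑ i, ∑ j,
            (w i : ℝ≥0∞) * (w j : ℝ≥0∞) * ∫⁻ x, (‖x i - x j‖₊ : ℝ≥0∞) ^ 2 ∂γ := rfl
end
end

section
/- Let μ be a probability measure on ℝ with finite second moment and let T : ℝ → ℝ be a nondecreasing measurable map that is square-integrable with respect to μ. Then W2²( μ , T_#μ ) = ∫ |T(x) − x|² dμ(x), and the curve γ(t) = ((1−t)·Id + t·T)_#μ is a constant-speed geodesic on [0,1]: for all 0 ≤ s ≤ t ≤ 1, W2( γ(s) , γ(t) ) = (t − s) · W2( μ , T_#μ ). -/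
open MeasureTheory ENNReal NNReal Filter Topology

noncomputable section

section W2AuxSection
open Set

namespace W2aux

/-- kernel: `Hk x s = 1[s ≤ x] - 1[s ≤ 0]`. -/
def Hk (x s : ℝ) : ℝ := (if s ≤ x then 1 else 0) - (if s ≤ 0 then 1 else 0)

lemma Hk_nonneg (x : ℝ) (hx : 0 ≤ x) : Hk x = (Ioc (0:ℝ) x).indicator 1 := by
  funext s
  simp only [Hk, indicator, mem_Ioc, Pi.one_apply]
  rcases le_or_gt s 0 with h0 | h0
  · rw [if_pos h0, if_pos (h0.trans hx), if_neg (by simp [not_lt.2 h0])]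
    norm_num
  · rw [if_neg (not_le.2 h0)]
    by_cases hxs : s ≤ x
    · rw [if_pos hxs, if_pos ⟨h0, hxs⟩]; norm_num
    · rw [if_neg hxs, if_neg (by simp [hxs])]
      norm_num

lemma Hk_nonpos (x : ℝ) (hx : x ≤ 0) : Hk x = -((Ioc x (0:ℝ)).indicator 1) := by
  funext s
  simp only [Hk, indicator, mem_Ioc, Pi.one_apply, Pi.neg_apply]
  rcases le_or_gt s x with hxs | hxs
  · rw [if_pos hxs, if_pos (hxs.trans hx), if_neg (by simp [not_lt.2 hxs])]
    norm_num
  · rw [if_neg (not_le.2 hxs)]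
    by_cases h0 : s ≤ 0
    · rw [if_pos h0, if_pos ⟨hxs, h0⟩]
      norm_num
    · rw [if_neg h0, if_neg (by simp [h0])]
      norm_num

lemma integrable_indicator_Ioc (a b : ℝ) :
    Integrable ((Ioc a b).indicator (1 : ℝ → ℝ)) volume := by
  rw [integrable_indicator_iff measurableSet_Ioc]
  exact integrableOn_const measure_Ioc_lt_top.ne

lemma integral_indicator_Ioc (a b : ℝ) :
    ∫ s, (Ioc a b).indicator (1 : ℝ → ℝ) s = max (b - a) 0 := by
  rw [MeasureTheory.integral_indicator_one measurableSet_Ioc, measureReal_def, Real.volume_Ioc,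
    ENNReal.toReal_ofReal']

lemma Hk_integrable (x : ℝ) : Integrable (Hk x) volume := by
  rcases le_total 0 x with hx | hx
  · rw [Hk_nonneg x hx]; exact integrable_indicator_Ioc 0 x
  · rw [Hk_nonpos x hx]; exact (integrable_indicator_Ioc x 0).neg

lemma Hk_integral (x : ℝ) : ∫ s, Hk x s = x := by
  rcases le_total 0 x with hx | hx
  · rw [Hk_nonneg x hx, integral_indicator_Ioc]
    simp [max_eq_left, hx]
  · rw [Hk_nonpos x hx]
    simp only [Pi.neg_apply]
    rw [integral_neg, integral_indicator_Ioc]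
    have : max (0 - x) 0 = -x := by rw [max_eq_left] <;> linarith
    rw [this]; ring

lemma Hk_abs (x : ℝ) : (fun s => |Hk x s|) = (Ioc (min x 0) (max x 0)).indicator 1 := by
  rcases le_total 0 x with hx | hx
  · rw [Hk_nonneg x hx]
    funext s
    rw [min_eq_right hx, max_eq_left hx]
    simp only [indicator, mem_Ioc, Pi.one_apply]
    split_ifs <;> norm_num
  · rw [Hk_nonpos x hx]
    funext s
    rw [min_eq_left hx, max_eq_right hx]
    simp only [indicator, mem_Ioc, Pi.one_apply, Pi.neg_apply]
    split_ifs <;> norm_num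

lemma Hk_abs_integral (x : ℝ) : ∫ s, |Hk x s| = |x| := by
  rw [show (fun s => |Hk x s|) = fun s => (Ioc (min x 0) (max x 0)).indicator 1 s from Hk_abs x,
    integral_indicator_Ioc]
  rcases le_total 0 x with hx | hx
  · rw [min_eq_right hx, max_eq_left hx, abs_of_nonneg hx]; simp [hx]
  · rw [min_eq_left hx, max_eq_right hx, abs_of_nonpos hx]
    rw [max_eq_left] <;> linarith

lemma Hk_measurable : Measurable (fun q : ℝ × ℝ => Hk q.1 q.2) := by
  unfold Hk
  apply Measurable.sub
  · exact (measurable_const.ite (measurableSet_le measurable_snd measurable_fst) measurable_const)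
  · exact (measurable_const.ite (measurableSet_le measurable_snd measurable_const) measurable_const)

end W2aux

namespace W2aux2
open W2aux

variable {α : Type*} [MeasurableSpace α] {ρ : Measure α}

lemma memL2 {u : α → ℝ} (hu : AEMeasurable u ρ)
    (h2 : ∫⁻ a, (‖u a‖₊ : ℝ≥0∞) ^ 2 ∂ρ < ∞) : MemLp u 2 ρ := by
  refine ⟨hu.aestronglyMeasurable, ?_⟩
  rw [eLpNorm_eq_lintegral_rpow_enorm_toReal two_ne_zero ENNReal.ofNat_ne_top]
  refine ENNReal.rpow_lt_top_of_nonneg (by norm_num) ?_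
  have : ∀ a, ((‖u a‖₊ : ℝ≥0∞)) ^ (2 : ℝ≥0∞).toReal = (‖u a‖₊ : ℝ≥0∞) ^ 2 := by
    intro a
    rw [ENNReal.toReal_ofNat, show ((2:ℝ)) = ((2:ℕ):ℝ) by norm_num, ENNReal.rpow_natCast]
  simp_rw [enorm_eq_nnnorm, this]
  exact h2.ne

lemma lint_sq_eq_ofReal {u : α → ℝ} (hu : AEMeasurable u ρ)
    (h2 : ∫⁻ a, (‖u a‖₊ : ℝ≥0∞) ^ 2 ∂ρ < ∞) :
    ∫⁻ a, (‖u a‖₊ : ℝ≥0∞) ^ 2 ∂ρ = ENNReal.ofReal (∫ a, (u a) ^ 2 ∂ρ) := by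
  rw [MeasureTheory.ofReal_integral_eq_lintegral_ofReal ((memL2 hu h2).integrable_sq)
    (ae_of_all _ fun a => sq_nonneg _)]
  refine lintegral_congr fun a => ?_
  rw [← enorm_eq_nnnorm, Real.enorm_eq_ofReal_abs, ← ENNReal.ofReal_pow (abs_nonneg _), sq_abs]

lemma integrable_mul_of_L2 {u v : α → ℝ} (hu : MemLp u 2 ρ) (hv : MemLp v 2 ρ) :
    Integrable (fun a => u a * v a) ρ := by
  refine (hu.integrable_sq.add hv.integrable_sq).mono' (hu.1.mul hv.1) (ae_of_all _ fun a => ?_)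
  have h1 : ‖u a * v a‖ = |u a| * |v a| := by rw [Real.norm_eq_abs, abs_mul]
  rw [h1]
  simp only [Pi.add_apply]
  nlinarith [sq_nonneg (|u a| - |v a|), sq_abs (u a), sq_abs (v a), abs_nonneg (u a),
    abs_nonneg (v a)]

end W2aux2

namespace W2aux3
open W2aux

lemma rep (ρ : Measure (ℝ × ℝ)) [IsProbabilityMeasure ρ]
    (habs : Integrable (fun p : ℝ × ℝ => |p.1| * |p.2|) ρ) :
    Integrable (fun st : ℝ × ℝ => ∫ p, Hk p.1 st.1 * Hk p.2 st.2 ∂ρ)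
      ((volume : Measure ℝ).prod volume) ∧
    ∫ p, p.1 * p.2 ∂ρ =
      ∫ st, (∫ p, Hk p.1 st.1 * Hk p.2 st.2 ∂ρ) ∂((volume : Measure ℝ).prod volume) := by
  set σ : Measure (ℝ × ℝ) := (volume : Measure ℝ).prod volume with hσ
  have m1 : Measurable fun q : (ℝ × ℝ) × (ℝ × ℝ) => Hk q.1.1 q.2.1 :=
    Hk_measurable.comp ((measurable_fst.fst).prodMk (measurable_snd.fst))
  have m2 : Measurable fun q : (ℝ × ℝ) × (ℝ × ℝ) => Hk q.1.2 q.2.2 :=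
    Hk_measurable.comp ((measurable_fst.snd).prodMk (measurable_snd.snd))
  have hFmeas : Measurable fun q : (ℝ × ℝ) × (ℝ × ℝ) => Hk q.1.1 q.2.1 * Hk q.1.2 q.2.2 :=
    m1.mul m2
  have hint : Integrable
      (Function.uncurry fun p st : ℝ × ℝ => Hk p.1 st.1 * Hk p.2 st.2) (ρ.prod σ) := by
    have hunc : Function.uncurry (fun p st : ℝ × ℝ => Hk p.1 st.1 * Hk p.2 st.2) =
        fun q : (ℝ × ℝ) × (ℝ × ℝ) => Hk q.1.1 q.2.1 * Hk q.1.2 q.2.2 := rfl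
    rw [hunc, integrable_prod_iff hFmeas.aestronglyMeasurable]
    constructor
    · exact ae_of_all _ fun p => (Hk_integrable p.1).mul_prod (Hk_integrable p.2)
    · have hval : (fun p : ℝ × ℝ =>
          ∫ st : ℝ × ℝ, ‖Hk p.1 st.1 * Hk p.2 st.2‖ ∂σ) = fun p : ℝ × ℝ => |p.1| * |p.2| := by
        funext p
        have : (fun st : ℝ × ℝ => ‖Hk p.1 st.1 * Hk p.2 st.2‖) =
            fun st : ℝ × ℝ => |Hk p.1 st.1| * |Hk p.2 st.2| := by
          funext st; rw [Real.norm_eq_abs, abs_mul]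
        rw [this, hσ, integral_prod_mul (fun s => |Hk p.1 s|) (fun t => |Hk p.2 t|),
          Hk_abs_integral, Hk_abs_integral]
      exact hval ▸ habs
  have swap := integral_integral_swap hint
  refine ⟨hint.integral_prod_right, ?_⟩
  have hpt : (fun p : ℝ × ℝ => ∫ st : ℝ × ℝ, Hk p.1 st.1 * Hk p.2 st.2 ∂σ) =
      fun p : ℝ × ℝ => p.1 * p.2 := by
    funext p
    rw [hσ, integral_prod_mul (fun s => Hk p.1 s) (fun t => Hk p.2 t), Hk_integral, Hk_integral]
  calc ∫ p, p.1 * p.2 ∂ρ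
      = ∫ p, (∫ st : ℝ × ℝ, Hk p.1 st.1 * Hk p.2 st.2 ∂σ) ∂ρ := by rw [hpt]
    _ = ∫ st, (∫ p, Hk p.1 st.1 * Hk p.2 st.2 ∂ρ) ∂σ := swap

end W2aux3

namespace W2aux4
open W2aux

lemma Ifun_eq (ρ : Measure (ℝ × ℝ)) [IsProbabilityMeasure ρ] (s t : ℝ) :
    ∫ p : ℝ × ℝ, Hk p.1 s * Hk p.2 t ∂ρ =
      (ρ {p : ℝ × ℝ | s ≤ p.1 ∧ t ≤ p.2}).toReal
      - (if t ≤ 0 then 1 else 0) * (ρ {p : ℝ × ℝ | s ≤ p.1}).toReal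
      - (if s ≤ 0 then 1 else 0) * (ρ {p : ℝ × ℝ | t ≤ p.2}).toReal
      + (if s ≤ 0 then 1 else 0) * (if t ≤ 0 then 1 else 0) := by
  have hA : MeasurableSet {p : ℝ × ℝ | s ≤ p.1} := measurableSet_le measurable_const measurable_fst
  have hB : MeasurableSet {p : ℝ × ℝ | t ≤ p.2} := measurableSet_le measurable_const measurable_snd
  have hAB : MeasurableSet {p : ℝ × ℝ | s ≤ p.1 ∧ t ≤ p.2} := hA.inter hB
  set cs : ℝ := if s ≤ 0 then 1 else 0 with hcs
  set ct : ℝ := if t ≤ 0 then 1 else 0 with hct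
  have key : (fun p : ℝ × ℝ => Hk p.1 s * Hk p.2 t) =
      fun p : ℝ × ℝ =>
        ({p : ℝ × ℝ | s ≤ p.1 ∧ t ≤ p.2}).indicator (fun _ => (1:ℝ)) p
        - ct * ({p : ℝ × ℝ | s ≤ p.1}).indicator (fun _ => (1:ℝ)) p
        - cs * ({p : ℝ × ℝ | t ≤ p.2}).indicator (fun _ => (1:ℝ)) p
        + cs * ct := by
    funext p
    simp only [Hk, indicator, mem_setOf_eq, hcs, hct]
    by_cases h1 : s ≤ p.1 <;> by_cases h2 : t ≤ p.2 <;> simp [h1, h2] <;> split_ifs <;> ring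
  have iAB : Integrable (({p : ℝ × ℝ | s ≤ p.1 ∧ t ≤ p.2}).indicator (fun _ => (1:ℝ))) ρ :=
    (integrable_const (1:ℝ)).indicator hAB
  have iA : Integrable (({p : ℝ × ℝ | s ≤ p.1}).indicator (fun _ => (1:ℝ))) ρ :=
    (integrable_const (1:ℝ)).indicator hA
  have iB : Integrable (({p : ℝ × ℝ | t ≤ p.2}).indicator (fun _ => (1:ℝ))) ρ :=
    (integrable_const (1:ℝ)).indicator hB
  have h3 : Integrable (fun p : ℝ × ℝ =>
      ({p : ℝ × ℝ | s ≤ p.1 ∧ t ≤ p.2}).indicator (fun _ => (1:ℝ)) p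
      - ct * ({p : ℝ × ℝ | s ≤ p.1}).indicator (fun _ => (1:ℝ)) p) ρ := by
    exact iAB.sub (iA.const_mul ct)
  have h4 : Integrable (fun p : ℝ × ℝ =>
      ({p : ℝ × ℝ | s ≤ p.1 ∧ t ≤ p.2}).indicator (fun _ => (1:ℝ)) p
      - ct * ({p : ℝ × ℝ | s ≤ p.1}).indicator (fun _ => (1:ℝ)) p
      - cs * ({p : ℝ × ℝ | t ≤ p.2}).indicator (fun _ => (1:ℝ)) p) ρ := by
    exact h3.sub (iB.const_mul cs)
  have step1 : ∫ p : ℝ × ℝ, Hk p.1 s * Hk p.2 t ∂ρ =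
      (∫ p : ℝ × ℝ, (({p : ℝ × ℝ | s ≤ p.1 ∧ t ≤ p.2}).indicator (fun _ => (1:ℝ)) p
        - ct * ({p : ℝ × ℝ | s ≤ p.1}).indicator (fun _ => (1:ℝ)) p
        - cs * ({p : ℝ × ℝ | t ≤ p.2}).indicator (fun _ => (1:ℝ)) p) ∂ρ) + cs * ct := by
    rw [key]
    rw [integral_add h4 (integrable_const _), integral_const]
    simp [measure_univ]
  rw [step1, integral_sub h3 (iB.const_mul cs), integral_sub iAB (iA.const_mul ct),
    integral_const_mul, integral_const_mul]
  have e1 : ∫ p, ({p : ℝ × ℝ | s ≤ p.1 ∧ t ≤ p.2}).indicator (fun _ => (1:ℝ)) p ∂ρ =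
      (ρ {p : ℝ × ℝ | s ≤ p.1 ∧ t ≤ p.2}).toReal := integral_indicator_one hAB
  have e2 : ∫ p, ({p : ℝ × ℝ | s ≤ p.1}).indicator (fun _ => (1:ℝ)) p ∂ρ =
      (ρ {p : ℝ × ℝ | s ≤ p.1}).toReal := integral_indicator_one hA
  have e3 : ∫ p, ({p : ℝ × ℝ | t ≤ p.2}).indicator (fun _ => (1:ℝ)) p ∂ρ =
      (ρ {p : ℝ × ℝ | t ≤ p.2}).toReal := integral_indicator_one hB
  rw [e1, e2, e3]

lemma hoeffding (π πc : Measure (ℝ × ℝ)) [IsProbabilityMeasure π] [IsProbabilityMeasure πc]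
    (hm1 : ∀ s : ℝ, π {p : ℝ × ℝ | s ≤ p.1} = πc {p : ℝ × ℝ | s ≤ p.1})
    (hm2 : ∀ t : ℝ, π {p : ℝ × ℝ | t ≤ p.2} = πc {p : ℝ × ℝ | t ≤ p.2})
    (hcm : ∀ s t : ℝ, π {p : ℝ × ℝ | s ≤ p.1 ∧ t ≤ p.2} ≤ πc {p : ℝ × ℝ | s ≤ p.1 ∧ t ≤ p.2})
    (habs : Integrable (fun p : ℝ × ℝ => |p.1| * |p.2|) π)
    (habsc : Integrable (fun p : ℝ × ℝ => |p.1| * |p.2|) πc) :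
    ∫ p, p.1 * p.2 ∂π ≤ ∫ p, p.1 * p.2 ∂πc := by
  obtain ⟨hi1, he1⟩ := W2aux3.rep π habs
  obtain ⟨hi2, he2⟩ := W2aux3.rep πc habsc
  rw [he1, he2]
  refine integral_mono hi1 hi2 fun st => ?_
  rw [Ifun_eq π st.1 st.2, Ifun_eq πc st.1 st.2, hm1 st.1, hm2 st.2]
  have h1 : (π {p : ℝ × ℝ | st.1 ≤ p.1 ∧ st.2 ≤ p.2}).toReal ≤
      (πc {p : ℝ × ℝ | st.1 ≤ p.1 ∧ st.2 ≤ p.2}).toReal :=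
    ENNReal.toReal_mono (measure_ne_top _ _) (hcm st.1 st.2)
  linarith

end W2aux4

namespace W2main
open W2aux W2aux2 W2aux3 W2aux4

variable {α : Type*} [MeasurableSpace α] {ρ : Measure α}

lemma lint_sq_eq_ofReal2 {u : α → ℝ} (hu : MemLp u 2 ρ) :
    ∫⁻ a, (‖u a‖₊ : ℝ≥0∞) ^ 2 ∂ρ = ENNReal.ofReal (∫ a, (u a) ^ 2 ∂ρ) := by
  rw [MeasureTheory.ofReal_integral_eq_lintegral_ofReal hu.integrable_sq
    (ae_of_all _ fun a => sq_nonneg _)]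
  refine lintegral_congr fun a => ?_
  rw [← enorm_eq_nnnorm, Real.enorm_eq_ofReal_abs, ← ENNReal.ofReal_pow (abs_nonneg _), sq_abs]

end W2main

namespace W2main
open W2aux W2aux2 W2aux3 W2aux4

theorem W2sq_map_map (μ : Measure ℝ) [IsProbabilityMeasure μ] {f g : ℝ → ℝ}
    (hfm : Monotone f) (hgm : Monotone g) (hf : Measurable f) (hg : Measurable g)
    (hf2 : ∫⁻ x, (‖f x‖₊ : ℝ≥0∞) ^ 2 ∂μ < ∞) (hg2 : ∫⁻ x, (‖g x‖₊ : ℝ≥0∞) ^ 2 ∂μ < ∞) :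
    W2sq (μ.map f) (μ.map g) = ∫⁻ x, (‖f x - g x‖₊ : ℝ≥0∞) ^ 2 ∂μ := by
  have hfg : Measurable fun x : ℝ => (f x, g x) := hf.prodMk hg
  haveI : IsProbabilityMeasure (μ.map f) := Measure.isProbabilityMeasure_map hf.aemeasurable
  haveI : IsProbabilityMeasure (μ.map g) := Measure.isProbabilityMeasure_map hg.aemeasurable
  set πc : Measure (ℝ × ℝ) := μ.map fun x => (f x, g x) with hπc_def
  haveI : IsProbabilityMeasure πc := Measure.isProbabilityMeasure_map hfg.aemeasurable
  have hπc : IsCoupling πc (μ.map f) (μ.map g) := by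
    constructor
    · rw [hπc_def, Measure.map_map measurable_fst hfg]; rfl
    · rw [hπc_def, Measure.map_map measurable_snd hfg]; rfl
  -- measurable cost integrand
  have hcost_meas : Measurable fun p : ℝ × ℝ => (‖p.1 - p.2‖₊ : ℝ≥0∞) ^ 2 :=
    ((measurable_fst.sub measurable_snd).nnnorm.coe_nnreal_ennreal).pow_const 2
  have hsq_meas : Measurable fun x : ℝ => (‖x‖₊ : ℝ≥0∞) ^ 2 :=
    (measurable_nnnorm.coe_nnreal_ennreal).pow_const 2
  -- cost of the canonical coupling
  have hcost_c : ∫⁻ p, (‖p.1 - p.2‖₊ : ℝ≥0∞) ^ 2 ∂πc = ∫⁻ x, (‖f x - g x‖₊ : ℝ≥0∞) ^ 2 ∂μ := by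
    rw [hπc_def, lintegral_map hcost_meas hfg]
  -- the general lower bound
  have main : ∀ π : Measure (ℝ × ℝ), IsCoupling π (μ.map f) (μ.map g) →
      ∫⁻ x, (‖f x - g x‖₊ : ℝ≥0∞) ^ 2 ∂μ ≤ ∫⁻ p, (‖p.1 - p.2‖₊ : ℝ≥0∞) ^ 2 ∂π := by
    intro π hπ
    haveI hπprob : IsProbabilityMeasure π := by
      constructor
      have h1 : π.map Prod.fst Set.univ = π Set.univ := by
        rw [Measure.map_apply measurable_fst MeasurableSet.univ, Set.preimage_univ]
      rw [← h1, hπ.1]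
      exact measure_univ
    -- second moments of marginals of π
    have hX2 : ∫⁻ p, (‖p.1‖₊ : ℝ≥0∞) ^ 2 ∂π = ∫⁻ x, (‖f x‖₊ : ℝ≥0∞) ^ 2 ∂μ := by
      rw [← lintegral_map hsq_meas measurable_fst, hπ.1, lintegral_map hsq_meas hf]
    have hY2 : ∫⁻ p, (‖p.2‖₊ : ℝ≥0∞) ^ 2 ∂π = ∫⁻ x, (‖g x‖₊ : ℝ≥0∞) ^ 2 ∂μ := by
      rw [← lintegral_map hsq_meas measurable_snd, hπ.2, lintegral_map hsq_meas hg]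
    have hXm : MemLp (fun p : ℝ × ℝ => p.1) 2 π :=
      memL2 measurable_fst.aemeasurable (by rw [hX2]; exact hf2)
    have hYm : MemLp (fun p : ℝ × ℝ => p.2) 2 π :=
      memL2 measurable_snd.aemeasurable (by rw [hY2]; exact hg2)
    have hfμ : MemLp f 2 μ := memL2 hf.aemeasurable hf2
    have hgμ : MemLp g 2 μ := memL2 hg.aemeasurable hg2
    have hXmc : MemLp (fun p : ℝ × ℝ => p.1) 2 πc :=
      memL2 measurable_fst.aemeasurable (by
        have hsq1 : Measurable fun p : ℝ × ℝ => (‖p.1‖₊ : ℝ≥0∞) ^ 2 :=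
          hsq_meas.comp measurable_fst
        rw [hπc_def, lintegral_map hsq1 hfg]; exact hf2)
    have hYmc : MemLp (fun p : ℝ × ℝ => p.2) 2 πc :=
      memL2 measurable_snd.aemeasurable (by
        have hsq1 : Measurable fun p : ℝ × ℝ => (‖p.2‖₊ : ℝ≥0∞) ^ 2 :=
          hsq_meas.comp measurable_snd
        rw [hπc_def, lintegral_map hsq1 hfg]; exact hg2)
    -- integrable products
    have hmulπ : Integrable (fun p : ℝ × ℝ => p.1 * p.2) π := integrable_mul_of_L2 hXm hYm
    have hmulc : Integrable (fun p : ℝ × ℝ => p.1 * p.2) πc := integrable_mul_of_L2 hXmc hYmc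
    have habsπ : Integrable (fun p : ℝ × ℝ => |p.1| * |p.2|) π := by
      have := hmulπ.abs; simpa [abs_mul] using this
    have habsc : Integrable (fun p : ℝ × ℝ => |p.1| * |p.2|) πc := by
      have := hmulc.abs; simpa [abs_mul] using this
    -- marginal and comonotonicity hypotheses for Hoeffding
    have hm1 : ∀ s : ℝ, π {p : ℝ × ℝ | s ≤ p.1} = πc {p : ℝ × ℝ | s ≤ p.1} := by
      intro s
      have e : {p : ℝ × ℝ | s ≤ p.1} = Prod.fst ⁻¹' Set.Ici s := rfl
      rw [e, ← Measure.map_apply measurable_fst measurableSet_Ici,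
        ← Measure.map_apply measurable_fst measurableSet_Ici, hπ.1, hπc.1]
    have hm2 : ∀ t : ℝ, π {p : ℝ × ℝ | t ≤ p.2} = πc {p : ℝ × ℝ | t ≤ p.2} := by
      intro t
      have e : {p : ℝ × ℝ | t ≤ p.2} = Prod.snd ⁻¹' Set.Ici t := rfl
      rw [e, ← Measure.map_apply measurable_snd measurableSet_Ici,
        ← Measure.map_apply measurable_snd measurableSet_Ici, hπ.2, hπc.2]
    have hcm : ∀ s t : ℝ, π {p : ℝ × ℝ | s ≤ p.1 ∧ t ≤ p.2} ≤
        πc {p : ℝ × ℝ | s ≤ p.1 ∧ t ≤ p.2} := by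
      intro s t
      have hA : MeasurableSet {p : ℝ × ℝ | s ≤ p.1} :=
        measurableSet_le measurable_const measurable_fst
      have hB : MeasurableSet {p : ℝ × ℝ | t ≤ p.2} :=
        measurableSet_le measurable_const measurable_snd
      have hE : MeasurableSet {p : ℝ × ℝ | s ≤ p.1 ∧ t ≤ p.2} := hA.inter hB
      set U : Set ℝ := {x | s ≤ f x} with hU_def
      set V : Set ℝ := {x | t ≤ g x} with hV_def
      have hπcE : πc {p : ℝ × ℝ | s ≤ p.1 ∧ t ≤ p.2} = μ (U ∩ V) := by
        rw [hπc_def, Measure.map_apply hfg hE]; rfl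
      have hπcU : πc {p : ℝ × ℝ | s ≤ p.1} = μ U := by
        rw [hπc_def, Measure.map_apply hfg hA]; rfl
      have hπcV : πc {p : ℝ × ℝ | t ≤ p.2} = μ V := by
        rw [hπc_def, Measure.map_apply hfg hB]; rfl
      have hUV : U ⊆ V ∨ V ⊆ U := by
        by_cases h : U ⊆ V
        · exact Or.inl h
        · right
          obtain ⟨u, huU, huV⟩ := Set.not_subset.1 h
          intro v hvV
          rcases le_total v u with hvu | huv
          · exact absurd (le_trans hvV (hgm hvu)) huV
          · exact le_trans huU (hfm huv)
      have h1 : π {p : ℝ × ℝ | s ≤ p.1 ∧ t ≤ p.2} ≤ μ U := by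
        rw [← hπcU, ← hm1 s]; exact measure_mono fun p hp => hp.1
      have h2 : π {p : ℝ × ℝ | s ≤ p.1 ∧ t ≤ p.2} ≤ μ V := by
        rw [← hπcV, ← hm2 t]; exact measure_mono fun p hp => hp.2
      rw [hπcE]
      rcases hUV with h | h
      · rw [Set.inter_eq_self_of_subset_left h]; exact h1
      · rw [Set.inter_eq_self_of_subset_right h]; exact h2
    have hoeff : ∫ p, p.1 * p.2 ∂π ≤ ∫ p, p.1 * p.2 ∂πc :=
      hoeffding π πc hm1 hm2 hcm habsπ habsc
    -- expansion of the quadratic cost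
    have expand : ∀ ρ : Measure (ℝ × ℝ), MemLp (fun p : ℝ × ℝ => p.1) 2 ρ →
        MemLp (fun p : ℝ × ℝ => p.2) 2 ρ →
        ∫ p, (p.1 - p.2) ^ 2 ∂ρ =
          (∫ p, p.1 ^ 2 ∂ρ) + (∫ p, p.2 ^ 2 ∂ρ) - 2 * ∫ p, p.1 * p.2 ∂ρ := by
      intro ρ hX hY
      have hmul := integrable_mul_of_L2 hX hY
      have h1 := hX.integrable_sq
      have h2 := hY.integrable_sq
      have hptw : (fun p : ℝ × ℝ => (p.1 - p.2) ^ 2) =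
          fun p : ℝ × ℝ => p.1 ^ 2 + p.2 ^ 2 - 2 * (p.1 * p.2) := by
        funext p; ring
      have hadd : Integrable (fun p : ℝ × ℝ => p.1 ^ 2 + p.2 ^ 2) ρ := by exact h1.add h2
      have hmul2 : Integrable (fun p : ℝ × ℝ => 2 * (p.1 * p.2)) ρ := by exact hmul.const_mul 2
      rw [hptw, integral_sub hadd hmul2, integral_add h1 h2, integral_const_mul]
    -- equal marginal second moments
    have hsqr : AEStronglyMeasurable (fun x : ℝ => x ^ 2) ((μ.map f)) :=
      (measurable_id.pow_const 2).aestronglyMeasurable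
    have hsqr' : AEStronglyMeasurable (fun x : ℝ => x ^ 2) ((μ.map g)) :=
      (measurable_id.pow_const 2).aestronglyMeasurable
    have hint1 : ∫ p : ℝ × ℝ, p.1 ^ 2 ∂π = ∫ p : ℝ × ℝ, p.1 ^ 2 ∂πc := by
      have a1 : ∫ x, x ^ 2 ∂(π.map Prod.fst) = ∫ p : ℝ × ℝ, p.1 ^ 2 ∂π :=
        integral_map measurable_fst.aemeasurable (hπ.1 ▸ hsqr)
      have a2 : ∫ x, x ^ 2 ∂(πc.map Prod.fst) = ∫ p : ℝ × ℝ, p.1 ^ 2 ∂πc :=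
        integral_map measurable_fst.aemeasurable (hπc.1 ▸ hsqr)
      rw [← a1, ← a2, hπ.1, hπc.1]
    have hint2 : ∫ p : ℝ × ℝ, p.2 ^ 2 ∂π = ∫ p : ℝ × ℝ, p.2 ^ 2 ∂πc := by
      have a1 : ∫ x, x ^ 2 ∂(π.map Prod.snd) = ∫ p : ℝ × ℝ, p.2 ^ 2 ∂π :=
        integral_map measurable_snd.aemeasurable (hπ.2 ▸ hsqr')
      have a2 : ∫ x, x ^ 2 ∂(πc.map Prod.snd) = ∫ p : ℝ × ℝ, p.2 ^ 2 ∂πc :=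
        integral_map measurable_snd.aemeasurable (hπc.2 ▸ hsqr')
      rw [← a1, ← a2, hπ.2, hπc.2]
    -- pass to real integrals
    have hcostπ : ∫⁻ p, (‖p.1 - p.2‖₊ : ℝ≥0∞) ^ 2 ∂π =
        ENNReal.ofReal (∫ p, (p.1 - p.2) ^ 2 ∂π) := lint_sq_eq_ofReal2 (hXm.sub hYm)
    have hμside : ∫⁻ x, (‖f x - g x‖₊ : ℝ≥0∞) ^ 2 ∂μ =
        ENNReal.ofReal (∫ x, (f x - g x) ^ 2 ∂μ) := lint_sq_eq_ofReal2 (hfμ.sub hgμ)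
    have hμexp : ∫ x, (f x - g x) ^ 2 ∂μ = ∫ p, (p.1 - p.2) ^ 2 ∂πc := by
      have hm : AEStronglyMeasurable (fun p : ℝ × ℝ => (p.1 - p.2) ^ 2) πc :=
        ((measurable_fst.sub measurable_snd).pow_const 2).aestronglyMeasurable
      rw [hπc_def, integral_map hfg.aemeasurable hm]
    rw [hcostπ, hμside]
    apply ENNReal.ofReal_le_ofReal
    rw [hμexp, expand π hXm hYm, expand πc hXmc hYmc, hint1, hint2]
    linarith
  refine le_antisymm ?_ ?_
  · exact le_trans (iInf₂_le πc hπc) hcost_c.le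
  · exact le_iInf₂ main
end W2main

namespace W2main

lemma enn_sq_add_le (a b : ℝ) :
    (‖a + b‖₊ : ℝ≥0∞) ^ 2 ≤ 2 * (‖a‖₊ : ℝ≥0∞) ^ 2 + 2 * (‖b‖₊ : ℝ≥0∞) ^ 2 := by
  rw [← enorm_eq_nnnorm, Real.enorm_eq_ofReal_abs, ← enorm_eq_nnnorm, Real.enorm_eq_ofReal_abs,
    ← enorm_eq_nnnorm, Real.enorm_eq_ofReal_abs,
    ← ENNReal.ofReal_pow (abs_nonneg _), ← ENNReal.ofReal_pow (abs_nonneg _),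
    ← ENNReal.ofReal_pow (abs_nonneg _)]
  have h2 : (2 : ℝ≥0∞) = ENNReal.ofReal (2 : ℝ) := by norm_num
  rw [h2, ← ENNReal.ofReal_mul (by norm_num), ← ENNReal.ofReal_mul (by norm_num),
    ← ENNReal.ofReal_add (by positivity) (by positivity)]
  apply ENNReal.ofReal_le_ofReal
  have h1 : |a + b| ^ 2 ≤ (|a| + |b|) ^ 2 := by
    have h := abs_add_le a b
    nlinarith [abs_nonneg (a + b), abs_nonneg a, abs_nonneg b]
  nlinarith [h1, sq_nonneg (|a| - |b|)]

theorem monotone_map_optimal_and_geodesic'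
    (μ : Measure ℝ)
    (hμ_prob : IsProbabilityMeasure μ) (hμ_mom : FiniteSecondMoment μ)
    (T : ℝ → ℝ) (hT_mono : Monotone T) (hT_meas : Measurable T)
    (hT_L2 : ∫⁻ x, (‖T x‖₊ : ℝ≥0∞) ^ 2 ∂μ < ∞) :
    W2sq μ (μ.map T) = ∫⁻ x, (‖T x - x‖₊ : ℝ≥0∞) ^ 2 ∂μ ∧
    ∀ s t : ℝ, 0 ≤ s → s ≤ t → t ≤ 1 →
      W2 (μ.map fun x => (1 - s) * x + s * T x) (μ.map fun x => (1 - t) * x + t * T x) =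
        ENNReal.ofReal (t - s) * W2 μ (μ.map T) := by
  haveI := hμ_prob
  have hμ_mom' : ∫⁻ x : ℝ, (‖x‖₊ : ℝ≥0∞) ^ 2 ∂μ < ∞ := hμ_mom
  have key1 : W2sq (μ.map (fun x : ℝ => x)) (μ.map T) =
      ∫⁻ x, (‖x - T x‖₊ : ℝ≥0∞) ^ 2 ∂μ :=
    W2sq_map_map μ monotone_id hT_mono measurable_id hT_meas hμ_mom' hT_L2
  have hmapid : μ.map (fun x : ℝ => x) = μ := Measure.map_id
  have part1 : W2sq μ (μ.map T) = ∫⁻ x, (‖T x - x‖₊ : ℝ≥0∞) ^ 2 ∂μ := by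
    rw [hmapid] at key1
    rw [key1]
    exact lintegral_congr fun x => by rw [← nnnorm_neg (x - T x), neg_sub]
  refine ⟨part1, ?_⟩
  intro s t hs hst ht1
  have hmono : ∀ u : ℝ, 0 ≤ u → u ≤ 1 → Monotone fun x => (1 - u) * x + u * T x := by
    intro u h0 h1 a b hab
    have h1u : (0:ℝ) ≤ 1 - u := by linarith
    exact add_le_add (mul_le_mul_of_nonneg_left hab h1u)
      (mul_le_mul_of_nonneg_left (hT_mono hab) h0)
  have hmeas : ∀ u : ℝ, Measurable fun x : ℝ => (1 - u) * x + u * T x := fun u =>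
    (measurable_id.const_mul (1 - u)).add (hT_meas.const_mul u)
  have hsqT : Measurable fun x : ℝ => (‖T x‖₊ : ℝ≥0∞) ^ 2 :=
    (hT_meas.nnnorm.coe_nnreal_ennreal).pow_const 2
  have hsqid : Measurable fun x : ℝ => (‖x‖₊ : ℝ≥0∞) ^ 2 :=
    (measurable_nnnorm.coe_nnreal_ennreal).pow_const 2
  have hL2 : ∀ u : ℝ, ∫⁻ x, (‖(1 - u) * x + u * T x‖₊ : ℝ≥0∞) ^ 2 ∂μ < ∞ := by
    intro u
    set A : ℝ≥0∞ := 2 * (‖(1 - u : ℝ)‖₊ : ℝ≥0∞) ^ 2 with hA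
    set B : ℝ≥0∞ := 2 * (‖(u : ℝ)‖₊ : ℝ≥0∞) ^ 2 with hB
    have hbound : ∀ x : ℝ, (‖(1 - u) * x + u * T x‖₊ : ℝ≥0∞) ^ 2 ≤
        A * (‖x‖₊ : ℝ≥0∞) ^ 2 + B * (‖T x‖₊ : ℝ≥0∞) ^ 2 := by
      intro x
      refine le_trans (enn_sq_add_le ((1 - u) * x) (u * T x)) (le_of_eq ?_)
      rw [nnnorm_mul, nnnorm_mul, ENNReal.coe_mul, ENNReal.coe_mul, mul_pow, mul_pow,
        hA, hB]
      ring
    calc ∫⁻ x, (‖(1 - u) * x + u * T x‖₊ : ℝ≥0∞) ^ 2 ∂μ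
        ≤ ∫⁻ x, (A * (‖x‖₊ : ℝ≥0∞) ^ 2 + B * (‖T x‖₊ : ℝ≥0∞) ^ 2) ∂μ :=
          lintegral_mono hbound
      _ = A * (∫⁻ x, (‖x‖₊ : ℝ≥0∞) ^ 2 ∂μ) + B * ∫⁻ x, (‖T x‖₊ : ℝ≥0∞) ^ 2 ∂μ := by
          rw [lintegral_add_left (hsqid.const_mul A), lintegral_const_mul A hsqid,
            lintegral_const_mul B hsqT]
      _ < ∞ := by
          have hAne : A ≠ ⊤ := by
            rw [hA]
            exact ENNReal.mul_ne_top (by norm_num) (ENNReal.pow_ne_top ENNReal.coe_ne_top)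
          have hBne : B ≠ ⊤ := by
            rw [hB]
            exact ENNReal.mul_ne_top (by norm_num) (ENNReal.pow_ne_top ENNReal.coe_ne_top)
          exact ENNReal.add_lt_top.2
            ⟨ENNReal.mul_lt_top hAne.lt_top hμ_mom', ENNReal.mul_lt_top hBne.lt_top hT_L2⟩
  have keyst : W2sq (μ.map fun x => (1 - s) * x + s * T x)
      (μ.map fun x => (1 - t) * x + t * T x) =
      ∫⁻ x, (‖((1 - s) * x + s * T x) - ((1 - t) * x + t * T x)‖₊ : ℝ≥0∞) ^ 2 ∂μ :=
    W2sq_map_map μ (hmono s hs (hst.trans ht1)) (hmono t (hs.trans hst) ht1)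
      (hmeas s) (hmeas t) (hL2 s) (hL2 t)
  set c : ℝ≥0∞ := (‖(t - s : ℝ)‖₊ : ℝ≥0∞) with hc
  have hdiff : ∫⁻ x, (‖((1 - s) * x + s * T x) - ((1 - t) * x + t * T x)‖₊ : ℝ≥0∞) ^ 2 ∂μ =
      c ^ 2 * ∫⁻ x, (‖T x - x‖₊ : ℝ≥0∞) ^ 2 ∂μ := by
    rw [← lintegral_const_mul (c ^ 2) (f := fun x : ℝ => (‖T x - x‖₊ : ℝ≥0∞) ^ 2)
      ((hT_meas.sub measurable_id').nnnorm.coe_nnreal_ennreal.pow_const 2)]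
    refine lintegral_congr fun x => ?_
    have e1 : ((1 - s) * x + s * T x) - ((1 - t) * x + t * T x) = -((t - s) * (T x - x)) := by
      ring
    rw [e1, nnnorm_neg, nnnorm_mul, ENNReal.coe_mul, mul_pow, hc]
  have hcofReal : ENNReal.ofReal (t - s) = c := by
    rw [hc, ← enorm_eq_nnnorm, Real.enorm_eq_ofReal_abs, abs_of_nonneg (by linarith)]
  rw [W2, W2, keyst, hdiff, part1, hcofReal]
  rw [ENNReal.mul_rpow_of_nonneg _ _ (by norm_num : (0:ℝ) ≤ 1/2)]
  congr 1
  rw [← ENNReal.rpow_natCast c 2, ← ENNReal.rpow_mul]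
  norm_num

end W2main

end W2AuxSection

/-- On the line, a nondecreasing map is optimal:
`W₂²(μ, T_#μ) = ∫ |T(x) - x|² dμ`, and `γ(t) = ((1-t) Id + t T)_# μ` is a constant-speed
geodesic: `W₂(γ(s), γ(t)) = (t - s) W₂(μ, T_#μ)` for `0 ≤ s ≤ t ≤ 1`. -/
theorem monotone_map_optimal_and_geodesic
    (μ : Measure ℝ)
    (hμ_prob : IsProbabilityMeasure μ) (hμ_mom : FiniteSecondMoment μ)
    (T : ℝ → ℝ) (hT_mono : Monotone T) (hT_meas : Measurable T)
    (hT_L2 : ∫⁻ x, (‖T x‖₊ : ℝ≥0∞) ^ 2 ∂μ < ∞) :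
    W2sq μ (μ.map T) = ∫⁻ x, (‖T x - x‖₊ : ℝ≥0∞) ^ 2 ∂μ ∧
    ∀ s t : ℝ, 0 ≤ s → s ≤ t → t ≤ 1 →
      W2 (μ.map fun x => (1 - s) * x + s * T x) (μ.map fun x => (1 - t) * x + t * T x) =
        ENNReal.ofReal (t - s) * W2 μ (μ.map T) :=
  W2main.monotone_map_optimal_and_geodesic' μ hμ_prob hμ_mom T hT_mono hT_meas hT_L2
end
end
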